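/- Let w ∈ ℝ^n with w_1 ≥ ... ≥ w_n ≥ 0, let h(z) = −g_w(z), w̃_i = −w_{n+1−i}, and β > 0. Then for every z ∈ ℝ^n, the point z − β·proj_{P(w̃)}(z/β) is the unique minimizer over z' ∈ ℝ^n of the strongly convex function z' ↦ β·h(z') + (1/2)‖z' − z‖²; i.e. prox_{βh}(z) = z − β·proj_{P(w̃)}(z/β). -/

import Mathlib

/-- The nondecreasing rearrangement `x^↑` of a vector `x ∈ ℝ^n`. -/
noncomputable def sortedAsc {n : ℕ} (x : Fin n → ℝ) : Fin n → ℝ := x ∘ Tuple.sort x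

/-- The generalized Gini welfare function `g_w(x) = Σ_i w_i x^↑_i`. -/
noncomputable def ggf {n : ℕ} (w x : Fin n → ℝ) : ℝ := ∑ i, w i * sortedAsc x i

/-- The permutahedron induced by `v`: the convex hull of all permutations of `v`. -/
noncomputable def permutahedron {n : ℕ} (v : Fin n → ℝ) : Set (Fin n → ℝ) :=
  convexHull ℝ {y | ∃ σ : Equiv.Perm (Fin n), y = v ∘ σ}

/-- The reversed negated weight vector `w̃`, with `w̃_i = −w_{n+1−i}`. -/
noncomputable def tildeW {n : ℕ} (w : Fin n → ℝ) : Fin n → ℝ := fun i => -w i.rev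

/-- `y` is the Euclidean projection of `z` onto `C`. -/
def IsProjOn {n : ℕ} (C : Set (Fin n → ℝ)) (z y : Fin n → ℝ) : Prop :=
  y ∈ C ∧ ∀ y' ∈ C,
    Real.sqrt (∑ i, (z i - y i) ^ 2) ≤ Real.sqrt (∑ i, (z i - y' i) ^ 2)

/-- Support inequality: every point of the permutahedron `P(w̃)` has inner product with `x`
at most `−g_w(x)`. -/
private lemma inner_le_negGgf {n : ℕ} (w : Fin n → ℝ) (hw : Antitone w) (x : Fin n → ℝ)
    {c : Fin n → ℝ} (hc : c ∈ permutahedron (tildeW w)) :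
    ∑ i, c i * x i ≤ -(ggf w x) := by
  have hlin : IsLinearMap ℝ (fun y : Fin n → ℝ => ∑ i, y i * x i) := by
    constructor
    · intro a b
      simp [add_mul, Finset.sum_add_distrib]
    · intro r a
      simp [smul_eq_mul, Finset.mul_sum, mul_assoc]
  have hconv : Convex ℝ {y : Fin n → ℝ | ∑ i, y i * x i ≤ -(ggf w x)} :=
    convex_halfSpace_le hlin _
  refine convexHull_min ?_ hconv hc
  rintro c ⟨σ, rfl⟩
  have hA : Antivary (sortedAsc x) w := (Tuple.monotone_sort x).antivary hw
  set τ : Equiv.Perm (Fin n) := ((Tuple.sort x).trans σ).trans Fin.revPerm with hτ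
  have h1 : ggf w x ≤ ∑ j, sortedAsc x j * w (τ j) := by
    simpa [ggf, mul_comm] using hA.sum_mul_le_sum_mul_comp_perm (σ := τ)
  have h2 : ∑ j, sortedAsc x j * w (τ j) = ∑ i, w ((σ i).rev) * x i := by
    rw [← Equiv.sum_comp (Tuple.sort x) (fun i => w ((σ i).rev) * x i)]
    refine Finset.sum_congr rfl fun j _ => ?_
    simp [sortedAsc, hτ, mul_comm]
  have h3 : ∑ i, (tildeW w ∘ σ) i * x i = -∑ i, w ((σ i).rev) * x i := by
    simp [tildeW, neg_mul, Finset.sum_neg_distrib]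
  simp only [Set.mem_setOf_eq]
  rw [h3]
  rw [h2] at h1
  linarith

/-- Attainment: there is a point of `P(w̃)` whose inner product with `x` equals `−g_w(x)`. -/
private lemma exists_inner_eq_negGgf {n : ℕ} (w : Fin n → ℝ) (x : Fin n → ℝ) :
    ∃ c ∈ permutahedron (tildeW w), ∑ i, c i * x i = -(ggf w x) := by
  refine ⟨tildeW w ∘ ((Tuple.sort x).symm.trans Fin.revPerm),
    subset_convexHull ℝ _ ⟨_, rfl⟩, ?_⟩
  have h1 : ∑ i, (tildeW w ∘ ((Tuple.sort x).symm.trans Fin.revPerm)) i * x i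
      = -∑ i, w ((Tuple.sort x).symm i) * x i := by
    simp [tildeW, Fin.rev_rev, neg_mul, Finset.sum_neg_distrib]
  rw [h1, neg_inj]
  rw [← Equiv.sum_comp (Tuple.sort x) (fun i => w ((Tuple.sort x).symm i) * x i)]
  refine Finset.sum_congr rfl fun j _ => ?_
  simp [ggf, sortedAsc]

theorem prox_eq_sub_proj {n : ℕ} (w : Fin n → ℝ) (hw : Antitone w) (hw0 : ∀ i, 0 ≤ w i)
    (β : ℝ) (hβ : 0 < β) (z y : Fin n → ℝ)
    (hy : IsProjOn (permutahedron (tildeW w)) (fun i => z i / β) y) :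
    (∀ z' : Fin n → ℝ,
      β * (-(ggf w (z - β • y))) + (∑ i, ((z - β • y) i - z i) ^ 2) / 2 ≤
        β * (-(ggf w z')) + (∑ i, (z' i - z i) ^ 2) / 2) ∧
    (∀ z' : Fin n → ℝ,
      β * (-(ggf w z')) + (∑ i, (z' i - z i) ^ 2) / 2 ≤
        β * (-(ggf w (z - β • y))) + (∑ i, ((z - β • y) i - z i) ^ 2) / 2 →
      z' = z - β • y) := by
  obtain ⟨hyC, hproj⟩ := hy
  set C := permutahedron (tildeW w) with hC
  set u : Fin n → ℝ := fun i => z i / β with hu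
  set p : Fin n → ℝ := z - β • y with hp
  have hpi : ∀ i, p i = z i - β * y i := by
    intro i; simp [hp, smul_eq_mul]
  have hpu : ∀ i, p i = β * (u i - y i) := by
    intro i
    rw [hpi i]
    simp only [hu]
    field_simp [hβ.ne']
  have hCconv : Convex ℝ C := convex_convexHull ℝ _
  -- variational inequality for the projection
  have VI : ∀ c ∈ C, ∑ i, (u i - y i) * (c i - y i) ≤ 0 := by
    intro c hc
    set A := ∑ i, (u i - y i) ^ 2 with hA
    set q := ∑ i, (c i - y i) ^ 2 with hqdef
    set ipr := ∑ i, (u i - y i) * (c i - y i) with hiprdef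
    have hA0 : 0 ≤ A := Finset.sum_nonneg fun i _ => sq_nonneg _
    have hq0 : 0 ≤ q := Finset.sum_nonneg fun i _ => sq_nonneg _
    have key : ∀ t : ℝ, 0 ≤ t → t ≤ 1 → 2 * t * ipr ≤ t ^ 2 * q := by
      intro t ht0 ht1
      have hm : (1 - t) • y + t • c ∈ C := hCconv hyC hc (by linarith) ht0 (by ring)
      have hle := hproj _ hm
      set B := ∑ i, (u i - ((1 - t) • y + t • c) i) ^ 2 with hB
      have hB0 : 0 ≤ B := Finset.sum_nonneg fun i _ => sq_nonneg _
      have hAB : A ≤ B := by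
        have h1 : Real.sqrt A ≤ Real.sqrt B := by
          simpa [hA, hB, hu] using hle
        nlinarith [Real.sq_sqrt hA0, Real.sq_sqrt hB0, Real.sqrt_nonneg A,
          Real.sqrt_nonneg B]
      have hBex : B = A - 2 * t * ipr + t ^ 2 * q := by
        have : B = ∑ i, ((u i - y i) ^ 2 - 2 * t * ((u i - y i) * (c i - y i))
            + t ^ 2 * (c i - y i) ^ 2) := by
          refine Finset.sum_congr rfl fun i _ => ?_
          simp only [Pi.add_apply, Pi.smul_apply, smul_eq_mul]
          ring
        rw [this, Finset.sum_add_distrib, Finset.sum_sub_distrib, ← Finset.mul_sum,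
          ← Finset.mul_sum, ← hA, ← hqdef, ← hiprdef]
      rw [hBex] at hAB
      linarith
    by_contra hip
    push_neg at hip
    rcases eq_or_lt_of_le hq0 with hq | hq
    · have h1 := key 1 zero_le_one le_rfl
      rw [← hq] at h1
      linarith
    · set t := min 1 (ipr / q) with ht
      have ht0 : 0 < t := lt_min one_pos (div_pos hip hq)
      have ht1 : t ≤ 1 := min_le_left _ _
      have h1 := key t ht0.le ht1
      have h2 : t * q ≤ ipr := (le_div_iff₀ hq).mp (min_le_right _ _)
      nlinarith
  -- the support function of C equals ⟨y,·⟩ at p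
  have hple : ∑ i, y i * p i ≤ -(ggf w p) := inner_le_negGgf w hw p hyC
  obtain ⟨c₀, hc₀, hc₀eq⟩ := exists_inner_eq_negGgf w p
  have hpeq : -(ggf w p) = ∑ i, y i * p i := by
    refine le_antisymm ?_ hple
    rw [← hc₀eq]
    have hd : ∑ i, c₀ i * p i - ∑ i, y i * p i
        = β * ∑ i, (u i - y i) * (c₀ i - y i) := by
      rw [← Finset.sum_sub_distrib, Finset.mul_sum]
      refine Finset.sum_congr rfl fun i _ => ?_
      rw [hpu i]; ring
    have h1 := VI c₀ hc₀
    nlinarith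
  -- key strong-convexity estimate
  have key : ∀ z' : Fin n → ℝ,
      β * (-(ggf w p)) + (∑ i, (p i - z i) ^ 2) / 2 + (∑ i, (z' i - p i) ^ 2) / 2 ≤
        β * (-(ggf w z')) + (∑ i, (z' i - z i) ^ 2) / 2 := by
    intro z'
    have h1 : ∑ i, y i * z' i ≤ -(ggf w z') := inner_le_negGgf w hw z' hyC
    have h2 : β * (∑ i, y i * z' i) ≤ β * (-(ggf w z')) :=
      mul_le_mul_of_nonneg_left h1 hβ.le
    have hid : ∑ i, (β * (y i * z' i) - β * (y i * p i) + (z' i - z i) ^ 2 / 2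
        - (p i - z i) ^ 2 / 2) = ∑ i, (z' i - p i) ^ 2 / 2 := by
      refine Finset.sum_congr rfl fun i _ => ?_
      rw [hpi i]; ring
    rw [Finset.sum_sub_distrib, Finset.sum_add_distrib, Finset.sum_sub_distrib,
      ← Finset.mul_sum, ← Finset.mul_sum, ← Finset.sum_div, ← Finset.sum_div,
      ← Finset.sum_div] at hid
    have h3 : β * (∑ i, y i * p i) = β * (-(ggf w p)) := by rw [hpeq]
    linarith
  constructor
  · intro z'
    have h1 := key z'
    have h2 : 0 ≤ (∑ i, (z' i - p i) ^ 2) / 2 := by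
      positivity
    linarith
  · intro z' hle
    have h1 := key z'
    have h2 : ∑ i, (z' i - p i) ^ 2 ≤ 0 := by linarith
    have h3 : ∑ i, (z' i - p i) ^ 2 = 0 :=
      le_antisymm h2 (Finset.sum_nonneg fun i _ => sq_nonneg _)
    funext i
    have h4 := (Finset.sum_eq_zero_iff_of_nonneg
      (fun i _ => sq_nonneg (z' i - p i))).mp h3 i (Finset.mem_univ i)
    have h5 : z' i - p i = 0 := by
      exact pow_eq_zero_iff (two_ne_zero) |>.mp h4
    linarith [h5]
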